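/- Let ρ be a partial assignment fixing exactly ℓ variables and let A be the unique clause of width ℓ falsified by ρ (containing, for each variable fixed by ρ, the literal falsified by ρ). If a clause C has a resolution derivation of width w and size s from the restricted formula F|ρ, then the clause A ∨ C has a resolution derivation of width at most w + ℓ and size at most s + 1 from F. -/

import Mathlib

/-- A clause is a finite set of literals; a literal is a pair (variable, polarity),
where polarity `true` means a positive literal. -/
abbrev Clause (V : Type) [DecidableEq V] := Finset (V × Bool)

/-- One step of a resolution derivation from `F`: the clause `C` is an axiom of `F`,
a weakening of an earlier clause, or the resolvent `A ∪ B` of earlier clauses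
`A ∨ x` and `B ∨ ¬x`. -/
def ResStep {V : Type} [DecidableEq V] (F : Set (Clause V)) (prev : List (Clause V))
    (C : Clause V) : Prop :=
  C ∈ F ∨ (∃ D ∈ prev, D ⊆ C) ∨
    (∃ (A B : Clause V) (x : V),
      insert (x, true) A ∈ prev ∧ insert (x, false) B ∈ prev ∧ C = A ∪ B)

/-- `L` is a resolution derivation from `F`: every clause follows from the preceding ones. -/
def IsResDerivation {V : Type} [DecidableEq V] (F : Set (Clause V))
    (L : List (Clause V)) : Prop :=
  ∀ i : Fin L.length, ResStep F (L.take i.1) (L.get i)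

/-- `F` derives clause `C` by a resolution derivation of size at most `s` and width at
most `w`. -/
def DerivesIn {V : Type} [DecidableEq V] (F : Set (Clause V)) (C : Clause V)
    (s w : ℕ) : Prop :=
  ∃ L : List (Clause V), IsResDerivation F L ∧ C ∈ L ∧ L.length ≤ s ∧
    ∀ D ∈ L, D.card ≤ w

/-- The restriction `F|ρ` of a formula by a partial assignment `ρ`: clauses containing a
literal satisfied by `ρ` are removed, and falsified literals are deleted from the
remaining clauses. -/
def restrictFormula {V : Type} [DecidableEq V] (F : Set (Clause V))
    (ρ : V → Option Bool) : Set (Clause V) :=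
  {C' | ∃ C ∈ F, (∀ l ∈ C, ρ l.1 ≠ some l.2) ∧
    C' = C.filter (fun l => ρ l.1 ≠ some (!l.2))}

lemma isResDerivation_snoc {V : Type} [DecidableEq V] {F : Set (Clause V)}
    {L : List (Clause V)} {E : Clause V}
    (hL : IsResDerivation F L) (hE : ResStep F L E) :
    IsResDerivation F (L ++ [E]) := by
  intro i
  rcases lt_or_ge i.1 L.length with hi | hi
  · have h1 : (L ++ [E]).take i.1 = L.take i.1 :=
      List.take_append_of_le_length (le_of_lt hi)
    have h2 : (L ++ [E]).get i = L.get ⟨i.1, hi⟩ := by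
      simp [List.get_eq_getElem, List.getElem_append_left hi]
    rw [h1, h2]; exact hL ⟨i.1, hi⟩
  · have hlen : i.1 = L.length := by
      have := i.2; simp at this; omega
    have h1 : (L ++ [E]).take i.1 = L := by rw [hlen]; exact List.take_left
    have h2 : (L ++ [E]).get i = E := by
      simp [List.get_eq_getElem]
      exact List.getElem_concat_length (l := L) (a := E) (i := i.1) hlen _
    rw [h1, h2]; exact hE

lemma shadow_derivation {V : Type} [DecidableEq V]
    (F : Set (Clause V)) (ρ : V → Option Bool) (A : Clause V)
    (hA : ∀ l : V × Bool, l ∈ A ↔ ρ l.1 = some (!l.2)) :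
    ∀ L : List (Clause V), IsResDerivation (restrictFormula F ρ) L →
      ∃ L' : List (Clause V), IsResDerivation F L' ∧ L'.length = L.length ∧
        ∀ i : ℕ, ∀ (h1 : i < L'.length) (h2 : i < L.length), L'[i] ⊆ A ∪ L[i] := by
  intro L
  induction L using List.reverseRecOn with
  | nil => intro _; exact ⟨[], fun i => absurd i.2 (by simp), rfl, fun i h1 h2 => absurd h2 (by simp)⟩
  | append_singleton L D ih =>
    intro hder
    have hderL : IsResDerivation (restrictFormula F ρ) L := by
      intro i
      have := hder ⟨i.1, by simp⟩
      rwa [List.take_append_of_le_length (le_of_lt i.2),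
        show (L ++ [D]).get ⟨i.1, _⟩ = L.get i by
          simp [List.get_eq_getElem, List.getElem_append_left i.2]] at this
    have hstep : ResStep (restrictFormula F ρ) L D := by
      have := hder ⟨L.length, by simp⟩
      rwa [List.take_left,
        show (L ++ [D]).get ⟨L.length, _⟩ = D by
          rw [List.get_eq_getElem]; exact List.getElem_concat_length (l := L) (a := D) (i := L.length) rfl _] at this
    obtain ⟨L', hL', hlen, hsub⟩ := ih hderL
    -- find E with ResStep F L' E and E ⊆ A ∪ D
    have key : ∃ E : Clause V, ResStep F L' E ∧ E ⊆ A ∪ D := by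
      rcases hstep with hax | ⟨D', hD'mem, hD'sub⟩ | ⟨A', B', x, hm1, hm2, hDeq⟩
      · -- axiom
        obtain ⟨C₀, hC₀F, hns, heq⟩ := hax
        refine ⟨C₀, Or.inl hC₀F, fun l hl => ?_⟩
        rw [Finset.mem_union]
        by_cases hc : ρ l.1 = some (!l.2)
        · exact Or.inl ((hA l).mpr hc)
        · exact Or.inr (heq ▸ Finset.mem_filter.mpr ⟨hl, hc⟩)
      · -- weakening
        obtain ⟨j, hj⟩ := List.mem_iff_get.mp hD'mem
        have hj' : j.1 < L'.length := by omega
        refine ⟨L'[j.1], Or.inr (Or.inl ⟨L'[j.1], List.getElem_mem _, subset_rfl⟩), ?_⟩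
        have := hsub j.1 hj' j.2
        rw [show L[j.1] = D' from by rw [← List.get_eq_getElem]; exact hj] at this
        exact this.trans (Finset.union_subset_union_right hD'sub)
      · -- resolution
        obtain ⟨j, hj⟩ := List.mem_iff_get.mp hm1
        obtain ⟨k, hk⟩ := List.mem_iff_get.mp hm2
        have hj' : j.1 < L'.length := by omega
        have hk' : k.1 < L'.length := by omega
        set Ej := L'[j.1] with hEj
        set Ek := L'[k.1] with hEk
        have hEjsub : Ej ⊆ A ∪ insert (x, true) A' := by
          have := hsub j.1 hj' j.2
          rwa [show L[j.1] = insert (x, true) A' from by rw [← List.get_eq_getElem]; exact hj] at this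
        have hEksub : Ek ⊆ A ∪ insert (x, false) B' := by
          have := hsub k.1 hk' k.2
          rwa [show L[k.1] = insert (x, false) B' from by rw [← List.get_eq_getElem]; exact hk] at this
        have hEjmem : Ej ∈ L' := List.getElem_mem _
        have hEkmem : Ek ∈ L' := List.getElem_mem _
        by_cases hxj : (x, true) ∈ Ej
        · by_cases hxk : (x, false) ∈ Ek
          · refine ⟨Ej.erase (x, true) ∪ Ek.erase (x, false),
              Or.inr (Or.inr ⟨Ej.erase (x, true), Ek.erase (x, false), x,
                by rw [Finset.insert_erase hxj]; exact hEjmem,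
                by rw [Finset.insert_erase hxk]; exact hEkmem, rfl⟩), ?_⟩
            rw [hDeq]
            intro l hl
            rw [Finset.mem_union] at hl
            rcases hl with hl | hl
            · rw [Finset.mem_erase] at hl
              have := hEjsub hl.2
              simp only [Finset.mem_union, Finset.mem_insert] at this ⊢
              rcases this with h | h | h
              · exact Or.inl h
              · exact absurd h hl.1
              · exact Or.inr (Or.inl h)
            · rw [Finset.mem_erase] at hl
              have := hEksub hl.2
              simp only [Finset.mem_union, Finset.mem_insert] at this ⊢
              rcases this with h | h | h
              · exact Or.inl h
              · exact absurd h hl.1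
              · exact Or.inr (Or.inr h)
          · refine ⟨Ek, Or.inr (Or.inl ⟨Ek, hEkmem, subset_rfl⟩), ?_⟩
            rw [hDeq]
            intro l hl
            have := hEksub hl
            simp only [Finset.mem_union, Finset.mem_insert] at this ⊢
            rcases this with h | h | h
            · exact Or.inl h
            · exact absurd (h ▸ hl) hxk
            · exact Or.inr (Or.inr h)
        · refine ⟨Ej, Or.inr (Or.inl ⟨Ej, hEjmem, subset_rfl⟩), ?_⟩
          rw [hDeq]
          intro l hl
          have := hEjsub hl
          simp only [Finset.mem_union, Finset.mem_insert] at this ⊢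
          rcases this with h | h | h
          · exact Or.inl h
          · exact absurd (h ▸ hl) hxj
          · exact Or.inr (Or.inl h)
    obtain ⟨E, hEstep, hEsub⟩ := key
    refine ⟨L' ++ [E], isResDerivation_snoc hL' hEstep, by simp [hlen], ?_⟩
    intro i h1 h2
    simp only [List.length_append, List.length_singleton] at h1 h2
    rcases lt_or_ge i L.length with hi | hi
    · rw [List.getElem_append_left (hlen ▸ hi : i < L'.length),
        List.getElem_append_left hi]
      exact hsub i (hlen ▸ hi) hi
    · have hie : i = L.length := by omega
      rw [List.getElem_concat_length (l := L') (a := E) (i := i) (by omega),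
        List.getElem_concat_length (l := L) (a := D) (i := i) hie]
      exact hEsub
/-- If `ρ` fixes exactly `ℓ` variables, `A` is the unique width-`ℓ` clause falsified by `ρ`
(containing, for each fixed variable, the literal falsified by `ρ`), and `C` has a
resolution derivation of size `s` and width `w` from `F|ρ`, then `A ∨ C` has a resolution
derivation of size at most `s + 1` and width at most `w + ℓ` from `F`. -/
theorem derivation_from_restriction {V : Type} [DecidableEq V] [Fintype V]
    (F : Set (Clause V)) (ρ : V → Option Bool) (ℓ : ℕ)
    (hρ : (Finset.univ.filter (fun v : V => (ρ v).isSome)).card = ℓ)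
    (A : Clause V) (hA : ∀ l : V × Bool, l ∈ A ↔ ρ l.1 = some (!l.2))
    (C : Clause V) (s w : ℕ)
    (h : DerivesIn (restrictFormula F ρ) C s w) :
    DerivesIn F (A ∪ C) (s + 1) (w + ℓ) := by
  have hcardA : A.card = ℓ := by
    rw [← hρ]
    apply Finset.card_bij (fun l _ => l.1)
    · intro l hl
      rw [Finset.mem_filter]
      exact ⟨Finset.mem_univ _, by rw [(hA l).mp hl]; rfl⟩
    · intro l1 h1 l2 h2 heq
      have e1 := (hA l1).mp h1
      have e2 := (hA l2).mp h2
      rw [heq, e2] at e1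
      have : l1.2 = l2.2 := (Bool.not_inj (Option.some.inj e1)).symm
      exact Prod.ext heq this
    · intro v hv
      rw [Finset.mem_filter] at hv
      obtain ⟨b, hb⟩ := Option.isSome_iff_exists.mp hv.2
      exact ⟨(v, !b), (hA (v, !b)).mpr (by simp [hb]), rfl⟩
  obtain ⟨L, hder, hC, hlen, hw⟩ := h
  obtain ⟨L', hder', hlen', hsub⟩ := shadow_derivation F ρ A hA L hder
  obtain ⟨j, hj⟩ := List.mem_iff_get.mp hC
  have hj' : j.1 < L'.length := by omega
  have hjsub : L'[j.1] ⊆ A ∪ C := by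
    have := hsub j.1 hj' j.2
    rwa [show L[j.1] = C from by rw [← List.get_eq_getElem]; exact hj] at this
  refine ⟨L' ++ [A ∪ C], isResDerivation_snoc hder'
      (Or.inr (Or.inl ⟨L'[j.1], List.getElem_mem _, hjsub⟩)),
    List.mem_append_right _ (List.mem_singleton.mpr rfl),
    by simp [hlen']; omega, ?_⟩
  intro D hD
  rw [List.mem_append, List.mem_singleton] at hD
  have hAC : (A ∪ C).card ≤ w + ℓ := by
    calc (A ∪ C).card ≤ A.card + C.card := Finset.card_union_le _ _
    _ ≤ ℓ + w := by
        have := hw C hC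
        omega
    _ = w + ℓ := by omega
  rcases hD with hD | rfl
  · obtain ⟨i, hi⟩ := List.mem_iff_get.mp hD
    have hi2 : i.1 < L.length := by omega
    have := hsub i.1 i.2 hi2
    rw [show L'[i.1] = D from by rw [← List.get_eq_getElem]; exact hi] at this
    calc D.card ≤ (A ∪ L[i.1]).card := Finset.card_le_card this
    _ ≤ A.card + L[i.1].card := Finset.card_union_le _ _
    _ ≤ ℓ + w := by
        have := hw L[i.1] (List.getElem_mem _)
        omega
    _ = w + ℓ := by omega
  · exact hAC
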